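/- Let X be a real normed space, n ≥ 2, ν : X^n → ℝ a norm on X^n (ν(x) = 0 iff x = 0, ν(x+y) ≤ ν(x)+ν(y), ν(c·x) = |c|·ν(x) for c ∈ ℝ), and v_1,…,v_n ∈ X distinct. Define f(u) := ν(u−v_1,…,u−v_n) for u ∈ X. Suppose ū ∈ X is a global minimizer of f and x*_1,…,x*_n ∈ X* satisfy Σ_{i=1}^n x*_i = 0, ν*(x*_1,…,x*_n) = 1, and Σ_{i=1}^n ⟨x*_i, ū − v_i⟩ = ν(ū−v_1,…,ū−v_n), where ν*(x*) := sup{Σ_{i=1}^n ⟨x*_i, x_i⟩ : ν(x) ≤ 1}. Then the set of all global minimizers of f equals {u ∈ X : Σ_{i=1}^n ⟨x*_i, u − v_i⟩ = ν(u−v_1,…,u−v_n)}. -/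
import Mathlib


open Finset

/-- The dual norm on `(X*)^n` of a norm `ν` on `X^n`:
`ν*(x*) = sup { Σ ⟨x*_i, x_i⟩ : ν(x) ≤ 1 }`. -/
noncomputable def dualNormOf {X : Type*} [NormedAddCommGroup X] [NormedSpace ℝ X]
    {n : ℕ} (ν : (Fin n → X) → ℝ) (xs : Fin n → (X →L[ℝ] ℝ)) : ℝ :=
  sSup {r : ℝ | ∃ x : Fin n → X, ν x ≤ 1 ∧ r = ∑ i, xs i (x i)}

theorem stmt_14 {X : Type*} [NormedAddCommGroup X] [NormedSpace ℝ X]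
    (n : ℕ) (hn : 2 ≤ n) (ν : (Fin n → X) → ℝ)
    (hν0 : ∀ x : Fin n → X, ν x = 0 ↔ x = 0)
    (hνadd : ∀ x y : Fin n → X, ν (x + y) ≤ ν x + ν y)
    (hνsmul : ∀ (c : ℝ) (x : Fin n → X), ν (c • x) = |c| * ν x)
    (v : Fin n → X) (hv : Function.Injective v)
    (ub : X) (hub : ∀ u : X, ν (fun i => ub - v i) ≤ ν (fun i => u - v i))
    (xs : Fin n → (X →L[ℝ] ℝ))
    (hsum : (∑ i, xs i) = 0)
    (hdual : dualNormOf ν xs = 1)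
    (heq : ∑ i, xs i (ub - v i) = ν (fun i => ub - v i)) :
    {u : X | ∀ w : X, ν (fun i => u - v i) ≤ ν (fun i => w - v i)} =
      {u : X | ∑ i, xs i (u - v i) = ν (fun i => u - v i)} := by
  -- nonnegativity of ν
  have hpos : ∀ x : Fin n → X, 0 ≤ ν x := by
    intro x
    have h1 := hνadd x (-x)
    have h2 : ν (x + -x) = 0 := by rw [(hν0 _).2]; simp
    have h3 : ν (-x) = ν x := by
      have := hνsmul (-1) x
      simpa using this
    nlinarith
  -- key inequality: ∑ xs i (x i) ≤ ν x
  have hkey : ∀ x : Fin n → X, ∑ i, xs i (x i) ≤ ν x := by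
    intro x
    by_cases hx : x = 0
    · simp [hx, (hν0 0).2 rfl]
    · have hνx : 0 < ν x := by
        rcases lt_or_eq_of_le (hpos x) with h | h
        · exact h
        · exact absurd ((hν0 x).1 h.symm) hx
      have hbdd : BddAbove {r : ℝ | ∃ y : Fin n → X, ν y ≤ 1 ∧ r = ∑ i, xs i (y i)} := by
        by_contra hb
        have := Real.sSup_of_not_bddAbove hb
        rw [dualNormOf] at hdual
        rw [this] at hdual
        norm_num at hdual
      have hmem : (ν x)⁻¹ * ∑ i, xs i (x i) ∈
          {r : ℝ | ∃ y : Fin n → X, ν y ≤ 1 ∧ r = ∑ i, xs i (y i)} := by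
        refine ⟨(ν x)⁻¹ • x, ?_, ?_⟩
        · rw [hνsmul]
          rw [abs_of_pos (inv_pos.2 hνx)]
          rw [inv_mul_cancel₀ hνx.ne']
        · simp [Finset.mul_sum]
      have hle := le_csSup hbdd hmem
      rw [← dualNormOf, hdual] at hle
      calc ∑ i, xs i (x i) = ν x * ((ν x)⁻¹ * ∑ i, xs i (x i)) := by
            field_simp
        _ ≤ ν x * 1 := by exact mul_le_mul_of_nonneg_left hle hνx.le
        _ = ν x := mul_one _
  -- ∑ xs i (u - v i) is constant in u
  have hconst : ∀ u : X, ∑ i, xs i (u - v i) = ∑ i, xs i (ub - v i) := by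
    intro u
    have h0 : ∑ i, xs i (u - ub) = 0 := by
      have : (∑ i, xs i) (u - ub) = 0 := by rw [hsum]; simp
      simpa [ContinuousLinearMap.sum_apply] using this
    calc ∑ i, xs i (u - v i) = ∑ i, (xs i (u - ub) + xs i (ub - v i)) := by
          apply Finset.sum_congr rfl
          intro i _
          rw [← map_add]
          congr 1
          abel
      _ = ∑ i, xs i (u - ub) + ∑ i, xs i (ub - v i) := Finset.sum_add_distrib
      _ = ∑ i, xs i (ub - v i) := by rw [h0, zero_add]
  ext u
  simp only [Set.mem_setOf_eq]
  constructor
  · intro hmin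
    have h1 : ν (fun i => u - v i) ≤ ν (fun i => ub - v i) := hmin ub
    have h2 : ν (fun i => ub - v i) ≤ ν (fun i => u - v i) := hub u
    rw [hconst u, heq]
    linarith
  · intro heqo w
    have := hub w
    rw [hconst u, heq] at heqo
    linarith
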